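/- arXiv:1912.10177 — 5 statements merged into one kernel-verified Lean document; each statement's English description precedes it below -/
import Mathlib

section
/- Let q be a prime power and n an odd positive integer. Let ω₀ be an element of order (qⁿ+1)(q−1) in the multiplicative group of the field with q^{2n} elements, and let ω = ω₀^{q−1}. Set W = F_{qⁿ}* · ⟨ω⟩ (the set of products of a nonzero element of the subfield F_{qⁿ} with a power of ω). Then if q is even, W equals the full multiplicative group F_{q^{2n}}*; and if q is odd, F_{q^{2n}}* is the disjoint union of W and Wω₀. -/
private lemma aux_split {G : Type*} [CommGroup G] {m₁ m₂ : ℕ} (h : Nat.Coprime m₁ m₂) {x : G}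
    (hx : x ^ (m₁ * m₂) = 1) : ∃ a b : G, a ^ m₁ = 1 ∧ b ^ m₂ = 1 ∧ x = a * b := by
  have hb : (m₁ : ℤ) * Int.gcdA m₁ m₂ + (m₂ : ℤ) * Int.gcdB m₁ m₂ = 1 := by
    have h1 := Int.gcd_eq_gcd_ab (m₁ : ℤ) (m₂ : ℤ)
    rw [Int.gcd_natCast_natCast, h.gcd_eq_one] at h1
    exact_mod_cast h1.symm
  have hx' : x ^ ((m₁ * m₂ : ℕ) : ℤ) = 1 := by rw [zpow_natCast, hx]
  refine ⟨x ^ ((m₂ : ℤ) * Int.gcdB m₁ m₂), x ^ ((m₁ : ℤ) * Int.gcdA m₁ m₂), ?_, ?_, ?_⟩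
  · rw [← zpow_natCast (x ^ ((m₂ : ℤ) * Int.gcdB m₁ m₂)) m₁, ← zpow_mul,
      show ((m₂ : ℤ) * Int.gcdB m₁ m₂) * (m₁ : ℤ) = ((m₁ * m₂ : ℕ) : ℤ) * Int.gcdB m₁ m₂ by
        push_cast; ring, zpow_mul, hx', one_zpow]
  · rw [← zpow_natCast (x ^ ((m₁ : ℤ) * Int.gcdA m₁ m₂)) m₂, ← zpow_mul,
      show ((m₁ : ℤ) * Int.gcdA m₁ m₂) * (m₂ : ℤ) = ((m₁ * m₂ : ℕ) : ℤ) * Int.gcdA m₁ m₂ by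
        push_cast; ring, zpow_mul, hx', one_zpow]
  · rw [← zpow_add,
      show (m₂ : ℤ) * Int.gcdB m₁ m₂ + (m₁ : ℤ) * Int.gcdA m₁ m₂ = 1 by linarith [hb], zpow_one]

/-- Lemma 2.1: With `ω₀` of order `(q^n+1)(q-1)` in `F_{q^{2n}}^*` and
`ω = ω₀^{q-1}`, set `W = F_{q^n}^* ⬝ ⟨ω⟩`.  If `q` is even then `W = F_{q^{2n}}^*`,
and if `q` is odd then `F_{q^{2n}}^*` is the disjoint union of `W` and `W·ω₀`. -/
theorem stmt0 {q n : ℕ} (hq : IsPrimePow q) (hn : Odd n) (hn0 : 0 < n)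
    {F : Type*} [Field F] [Fintype F] (hF : Fintype.card F = q ^ (2 * n))
    (ω₀ ω : F) (hω₀ : orderOf ω₀ = (q ^ n + 1) * (q - 1)) (hω : ω = ω₀ ^ (q - 1)) :
    (Even q → ∀ x : F, x ≠ 0 →
      (∃ a : F, a ≠ 0 ∧ a ^ (q ^ n) = a ∧ ∃ i : ℕ, x = a * ω ^ i)) ∧
    (Odd q → ∀ x : F, x ≠ 0 →
      ((∃ a : F, a ≠ 0 ∧ a ^ (q ^ n) = a ∧ ∃ i : ℕ, x = a * ω ^ i) ∧
        ¬ (∃ a : F, a ≠ 0 ∧ a ^ (q ^ n) = a ∧ ∃ i : ℕ, x = a * ω ^ i * ω₀)) ∨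
      (¬ (∃ a : F, a ≠ 0 ∧ a ^ (q ^ n) = a ∧ ∃ i : ℕ, x = a * ω ^ i) ∧
        (∃ a : F, a ≠ 0 ∧ a ^ (q ^ n) = a ∧ ∃ i : ℕ, x = a * ω ^ i * ω₀))) := by
  have hq2 : 2 ≤ q := hq.two_le
  set d := q - 1 with hd
  set m := q ^ n - 1 with hm
  set m' := q ^ n + 1 with hm'
  have hd0 : 0 < d := by omega
  have hqn1 : 1 ≤ q ^ n := Nat.one_le_pow _ _ (by omega)
  have hqn2 : 2 ≤ q ^ n := by
    calc 2 = 2 ^ 1 := rfl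
    _ ≤ q ^ n := Nat.pow_le_pow_left hq2 1 |>.trans (Nat.pow_le_pow_right (by omega) hn0)
  have hm1 : 1 ≤ m := by omega
  have hmm' : m * m' = q ^ (2 * n) - 1 := by
    have h2 : q ^ (2 * n) = q ^ n * q ^ n := by rw [two_mul, pow_add]
    rw [h2, hm, hm']
    zify [hqn1, Nat.one_le_of_lt (by nlinarith : 1 < q ^ n * q ^ n)]
    ring
  have hqm : q ^ n = m + 1 := by omega
  -- ω₀ is nonzero
  have hpow1 : ω₀ ^ (m' * d) = 1 := by rw [← hω₀]; exact pow_orderOf_eq_one ω₀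
  have hω₀ne : ω₀ ≠ 0 := fun h0 => by
    rw [h0, zero_pow (show m' * d ≠ 0 by positivity)] at hpow1
    exact zero_ne_one hpow1
  have hωne : ω ≠ 0 := by rw [hω]; exact pow_ne_zero _ hω₀ne
  -- order of ω
  have hordω : orderOf ω = m' := by
    rw [hω, orderOf_pow' ω₀ (by omega : d ≠ 0), hω₀, Nat.gcd_comm,
      Nat.gcd_eq_left (dvd_mul_left d m'), Nat.mul_div_cancel _ hd0]
  have hωm' : ω ^ m' = 1 := by rw [← hordω]; exact pow_orderOf_eq_one ω
  -- units
  set u : Fˣ := Units.mk0 ω hωne with hu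
  have huv : (u : F) = ω := rfl
  have hordu : orderOf u = m' := by rw [← orderOf_units, huv, hordω]
  haveI : NeZero m' := ⟨by omega⟩
  have hprim : IsPrimitiveRoot u m' := by
    have := IsPrimitiveRoot.orderOf u
    rwa [hordu] at this
  have hroots : ∀ b : Fˣ, b ^ m' = 1 → ∃ i : ℕ, b = u ^ i := by
    intro b hb
    have hmem : b ∈ rootsOfUnity m' F := (mem_rootsOfUnity m' b).mpr hb
    rw [← hprim.zpowers_eq, ← mem_powers_iff_mem_zpowers] at hmem
    obtain ⟨i, hi⟩ := hmem
    exact ⟨i, hi.symm⟩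
  -- main decomposition tool
  have hdecomp : ∀ m₁ m₂ : ℕ, m₁ ∣ m → m₂ ∣ m' → Nat.Coprime m₁ m₂ →
      ∀ x : F, x ≠ 0 → x ^ (m₁ * m₂) = 1 →
      ∃ a : F, a ≠ 0 ∧ a ^ (q ^ n) = a ∧ ∃ i : ℕ, x = a * ω ^ i := by
    intro m₁ m₂ hd1 hd2 hco x hx hxL
    set ux : Fˣ := Units.mk0 x hx with hux
    have huxL : ux ^ (m₁ * m₂) = 1 := by
      ext
      push_cast
      exact hxL
    obtain ⟨a, b, ha, hb, hab⟩ := aux_split hco huxL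
    have ham : a ^ m = 1 := by
      obtain ⟨c, hc⟩ := hd1
      rw [hc, pow_mul, ha, one_pow]
    have hbm : b ^ m' = 1 := by
      obtain ⟨c, hc⟩ := hd2
      rw [hc, pow_mul, hb, one_pow]
    obtain ⟨i, hi⟩ := hroots b hbm
    refine ⟨(a : F), a.ne_zero, ?_, i, ?_⟩
    · have ham' : (a : F) ^ m = 1 := by
        rw [← Units.val_pow_eq_pow_val, ham, Units.val_one]
      rw [hqm, pow_succ, ham', one_mul]
    · have : x = ((a * b : Fˣ) : F) := by rw [← hab]; rfl
      rw [this, hi]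
      push_cast [huv]
      ring
  have hgcd2 : Nat.gcd m m' ∣ 2 := by
    have h1 : Nat.gcd m m' ∣ m' - m := Nat.dvd_sub (Nat.gcd_dvd_right m m') (Nat.gcd_dvd_left m m')
    have h2 : m' - m = 2 := by omega
    rwa [h2] at h1
  constructor
  · -- even case
    intro hqe x hx
    have hmodd : ¬ (2 ∣ m) := by
      obtain ⟨c, hc⟩ := hqe
      have : 2 ∣ q ^ n := Dvd.dvd.pow (by omega) (by omega)
      omega
    have hco : Nat.Coprime m m' := by
      rcases (Nat.dvd_prime Nat.prime_two).mp hgcd2 with h | h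
      · exact h
      · exact absurd (h ▸ Nat.gcd_dvd_left m m') hmodd
    have hxN : x ^ (m * m') = 1 := by
      rw [hmm', ← hF]
      exact FiniteField.pow_card_sub_one_eq_one x hx
    exact hdecomp m m' dvd_rfl dvd_rfl hco x hx hxN
  · -- odd case
    intro hqo x hx
    obtain ⟨jq, hjq⟩ := hqo
    have hqnodd : ¬ (2 ∣ q ^ n) := by
      intro h2
      exact absurd ((Nat.Prime.dvd_of_dvd_pow Nat.prime_two) h2) (by omega)
    obtain ⟨k, hk⟩ : 2 ∣ m := by omega
    obtain ⟨k', hk'⟩ : 2 ∣ m' := by omega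
    have hkk' : k' = k + 1 := by omega
    -- choose a coprime factorization of L
    obtain ⟨m₁, m₂, hd1, hd2, hco, hLfac⟩ :
        ∃ m₁ m₂ : ℕ, m₁ ∣ m ∧ m₂ ∣ m' ∧ Nat.Coprime m₁ m₂ ∧ m₁ * m₂ = k * m' := by
      rcases Nat.even_or_odd k with hke | hko
      · -- k even, so k' = k+1 odd; take (m, k')
        obtain ⟨j, hj⟩ := hke
        refine ⟨m, k', dvd_rfl, ⟨2, by omega⟩, ?_, by rw [hk, hk']; ring⟩
        have hg : Nat.gcd m k' ∣ 2 := dvd_trans (Nat.dvd_gcd (Nat.gcd_dvd_left m k')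
          (dvd_trans (Nat.gcd_dvd_right m k') ⟨2, by omega⟩)) hgcd2
        rcases (Nat.dvd_prime Nat.prime_two).mp hg with h | h
        · exact h
        · exfalso
          have : 2 ∣ k' := h ▸ Nat.gcd_dvd_right m k'
          omega
      · -- k odd; take (k, m')
        obtain ⟨j, hj⟩ := hko
        refine ⟨k, m', ⟨2, by omega⟩, dvd_rfl, ?_, rfl⟩
        have hg : Nat.gcd k m' ∣ 2 := dvd_trans (Nat.dvd_gcd
          (dvd_trans (Nat.gcd_dvd_left k m') ⟨2, by omega⟩) (Nat.gcd_dvd_right k m')) hgcd2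
        rcases (Nat.dvd_prime Nat.prime_two).mp hg with h | h
        · exact h
        · exfalso
          have : 2 ∣ k := h ▸ Nat.gcd_dvd_left k m'
          omega
    set L : ℕ := k * m' with hL
    have hLm : L = m₁ * m₂ := hLfac.symm
    have hLm' : m * k' = L := by rw [hL, hk, hk']; ring
    -- membership characterization
    have hPpow : ∀ y : F, (∃ a : F, a ≠ 0 ∧ a ^ (q ^ n) = a ∧ ∃ i : ℕ, y = a * ω ^ i) →
        y ^ L = 1 := by
      rintro y ⟨a, ha0, haq, i, rfl⟩
      have ham : a ^ m = 1 := by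
        have : a ^ m * a = a := by rw [← pow_succ, ← hqm, haq]
        calc a ^ m = a ^ m * a * a⁻¹ := by field_simp
        _ = 1 := by rw [this]; field_simp
      have h1 : a ^ L = 1 := by rw [← hLm', pow_mul, ham, one_pow]
      have h2 : (ω ^ i) ^ L = 1 := by
        rw [← pow_mul, show i * L = m' * (i * k) by rw [hL]; ring, pow_mul, hωm', one_pow]
      rw [mul_pow, h1, h2, one_mul]
    have hPrev : ∀ y : F, y ≠ 0 → y ^ L = 1 →
        (∃ a : F, a ≠ 0 ∧ a ^ (q ^ n) = a ∧ ∃ i : ℕ, y = a * ω ^ i) := by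
      intro y hy hyL
      exact hdecomp m₁ m₂ hd1 hd2 hco y hy (by rwa [← hLm])
    -- ω₀ ^ L = s with s ≠ 1, s * s = 1
    set s : F := ω₀ ^ L with hs
    have hsq : ∀ y : F, y ≠ 0 → y ^ L * y ^ L = 1 := by
      intro y hy
      have h2L : L + L = m * m' := by rw [hL, hk]; ring
      rw [← pow_add, h2L, hmm', ← hF]
      exact FiniteField.pow_card_sub_one_eq_one y hy
    have hs1 : s ≠ 1 := by
      intro h1
      have hdvd : orderOf ω₀ ∣ L := orderOf_dvd_of_pow_eq_one h1
      rw [hω₀, hL, mul_comm k m'] at hdvd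
      have hdk : d ∣ k := (Nat.mul_dvd_mul_iff_left (show 0 < m' by omega)).mp hdvd
      -- so 2*d ∣ q^n - 1, contradiction
      have h2d : 2 * d ∣ q ^ n - 1 := by
        obtain ⟨c, hc⟩ := hdk
        refine ⟨c, ?_⟩
        rw [← hm, hk, hc]
        ring
      have hde : 2 ∣ d := by omega
      obtain ⟨e, he⟩ := hde
      have hq21 : q ^ 2 = 2 * d * (e + 1) + 1 := by
        have hqd : q = d + 1 := by omega
        rw [hqd, he]; ring
      have hmod1 : q ^ 2 ≡ 1 [MOD 2 * d] := by
        have h1q2 : 1 ≤ q ^ 2 := Nat.one_le_pow _ _ (by omega)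
        exact ((Nat.modEq_iff_dvd' h1q2).mpr ⟨e + 1, by omega⟩).symm
      obtain ⟨r, hr⟩ := hn
      have hqn : q ^ n ≡ q [MOD 2 * d] := by
        calc q ^ n = (q ^ 2) ^ r * q := by rw [hr, pow_succ, pow_mul]
        _ ≡ 1 ^ r * q [MOD 2 * d] := Nat.ModEq.mul ((hmod1).pow r) rfl
        _ = q := by ring
      have hqn1' : q ^ n ≡ 1 [MOD 2 * d] := ((Nat.modEq_iff_dvd' hqn1).mpr h2d).symm
      have hq1 : q ≡ 1 [MOD 2 * d] := (hqn.symm.trans hqn1')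
      have : 2 * d ∣ q - 1 := (Nat.modEq_iff_dvd' (by omega)).mp hq1.symm
      have := Nat.le_of_dvd (by omega) this
      omega
    have hss : s * s = 1 := hsq ω₀ hω₀ne
    have hsinv : s⁻¹ = s := inv_eq_of_mul_eq_one_right hss
    -- relation between Q x and P (x * ω₀⁻¹)
    have hQiff : ∀ y : F, (∃ a : F, a ≠ 0 ∧ a ^ (q ^ n) = a ∧ ∃ i : ℕ, y = a * ω ^ i * ω₀) ↔
        (∃ a : F, a ≠ 0 ∧ a ^ (q ^ n) = a ∧ ∃ i : ℕ, y * ω₀⁻¹ = a * ω ^ i) := by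
      intro y
      constructor
      · rintro ⟨a, h1, h2, i, rfl⟩
        exact ⟨a, h1, h2, i, by field_simp⟩
      · rintro ⟨a, h1, h2, i, hy⟩
        refine ⟨a, h1, h2, i, ?_⟩
        have : y * ω₀⁻¹ * ω₀ = a * ω ^ i * ω₀ := by rw [hy]
        rwa [inv_mul_cancel_right₀ hω₀ne] at this
    have hsm1 : s = -1 := by
      rcases mul_self_eq_one_iff.mp hss with h | h
      · exact absurd h hs1
      · exact h
    rcases mul_self_eq_one_iff.mp (hsq x hx) with ht | ht
    · left
      refine ⟨hPrev x hx ht, ?_⟩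
      rw [hQiff]
      intro hQ
      have h2 := hPpow _ hQ
      rw [mul_pow, ht, one_mul, inv_pow, ← hs, hsinv] at h2
      exact hs1 h2
    · right
      constructor
      · intro hP
        have h2 := hPpow x hP
        rw [ht] at h2
        exact hs1 (hsm1.trans h2)
      · rw [hQiff]
        apply hPrev (x * ω₀⁻¹) (mul_ne_zero hx (inv_ne_zero hω₀ne))
        rw [mul_pow, ht, inv_pow, ← hs, hsinv, hsm1]
        norm_num
end

section
/- Let q be a prime power and let x be an element of the field F_{q^6} such that x^{q^3+1} = 1 and x ∉ F_{q^2}. Then Tr_{F_{q^6}/F_{q^2}}(x) ≠ 1, where Tr denotes the relative field trace x ↦ x + x^{q^2} + x^{q^4}. -/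
/-- Lemma 2.2: If `x ∈ F_{q^6}` satisfies `x^{q^3+1} = 1` and
`x ∉ F_{q^2}`, then `Tr_{F_{q^6}/F_{q^2}}(x) = x + x^{q^2} + x^{q^4} ≠ 1`. -/
theorem stmt1 {q : ℕ} (hq : IsPrimePow q)
    {F : Type*} [Field F] [Fintype F] (hF : Fintype.card F = q ^ 6)
    (x : F) (hx : x ^ (q ^ 3 + 1) = 1) (hx2 : x ^ (q ^ 2) ≠ x) :
    x + x ^ (q ^ 2) + x ^ (q ^ 4) ≠ 1 := by
  intro h
  obtain ⟨r, k, hr, hk, rfl⟩ := hq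
  have hr' : Nat.Prime r := hr.nat_prime
  haveI : Fact (Nat.Prime (ringChar F)) := ⟨CharP.char_is_prime F _⟩
  obtain ⟨n, hpn, hcard⟩ := FiniteField.card F (ringChar F)
  have hrp : r = ringChar F := by
    have h1 : r ∣ (ringChar F) ^ (n : ℕ) := by
      rw [← hcard, hF]
      exact dvd_pow (dvd_pow_self r hk.ne') (by norm_num)
    exact (Nat.prime_dvd_prime_iff_eq hr' hpn).mp (hr'.dvd_of_dvd_pow h1)
  haveI : Fact (Nat.Prime r) := ⟨hr'⟩
  haveI : CharP F r := hrp ▸ ringChar.charP F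
  have frob : ∀ (a b : F) (m : ℕ),
      (a + b) ^ (r ^ k) ^ m = a ^ (r ^ k) ^ m + b ^ (r ^ k) ^ m := by
    intro a b m
    rw [← pow_mul, add_pow_char_pow, pow_mul]
  set B := x ^ (r ^ k) ^ 2 with hB
  set C := x ^ (r ^ k) ^ 4 with hC
  have h6 : x ^ ((r ^ k) ^ 6) = x := by rw [← hF]; exact FiniteField.pow_card x
  have hA3 : x ^ (r ^ k) ^ 3 * x = 1 := by rw [← pow_succ]; exact hx
  have hB3 : B ^ (r ^ k) ^ 3 * B = 1 := by
    rw [hB, ← pow_mul, ← pow_add,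
      show (r ^ k) ^ 2 * (r ^ k) ^ 3 + (r ^ k) ^ 2 = ((r ^ k) ^ 3 + 1) * (r ^ k) ^ 2 by ring,
      pow_mul, hx, one_pow]
  have hC3 : C ^ (r ^ k) ^ 3 * C = 1 := by
    rw [hC, ← pow_mul, ← pow_add,
      show (r ^ k) ^ 4 * (r ^ k) ^ 3 + (r ^ k) ^ 4 = ((r ^ k) ^ 3 + 1) * (r ^ k) ^ 4 by ring,
      pow_mul, hx, one_pow]
  have heq3 : x ^ (r ^ k) ^ 3 + B ^ (r ^ k) ^ 3 + C ^ (r ^ k) ^ 3 = 1 := by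
    have h1 : (x + B + C) ^ (r ^ k) ^ 3 = 1 := by rw [h, one_pow]
    rwa [frob, frob] at h1
  have key : B * C + x * C + x * B = x * B * C := by
    linear_combination (x * B * C) * heq3 - (B * C) * hA3 - (x * C) * hB3 - (x * B) * hC3
  have hfac : (1 - x) * (1 - B) * (1 - C) = 0 := by linear_combination -h + key
  have hCB : C = B ^ (r ^ k) ^ 2 := by
    rw [hB, ← pow_mul, show (r ^ k) ^ 2 * (r ^ k) ^ 2 = (r ^ k) ^ 4 from by ring, ← hC]
  have hxC : C ^ (r ^ k) ^ 2 = x := by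
    rw [hC, ← pow_mul, show (r ^ k) ^ 4 * (r ^ k) ^ 2 = (r ^ k) ^ 6 by ring, h6]
  have hx1 : x ≠ 1 := by
    intro hx1
    apply hx2
    rw [hB, hx1, one_pow]
  rcases mul_eq_zero.mp hfac with h12 | hCz
  · rcases mul_eq_zero.mp h12 with hxz | hBz
    · exact hx1 (sub_eq_zero.mp hxz).symm
    · have hB1 : B = 1 := (sub_eq_zero.mp hBz).symm
      have hC1 : C = 1 := by rw [hCB, hB1, one_pow]
      have : x = 1 := by rw [← hxC, hC1, one_pow]
      exact hx1 this
  · have hC1 : C = 1 := (sub_eq_zero.mp hCz).symm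
    have : x = 1 := by rw [← hxC, hC1, one_pow]
    exact hx1 this
end

section
/- Define F(n,p) = C(n+p−2, n−1)² · (n+2p−2)/(n·pⁿ) for a positive integer n and prime p. If p > 3 and n ≥ (p+1)/2, or if p ≤ 3 and n ≥ p+1, then F(n+1,p) < F(n,p). -/
/-- `F(n,p) = C(n+p-2,n-1)² · (n+2p-2)/(n·p^n)` as a rational number. -/
noncomputable def Fnp (n p : ℕ) : ℚ :=
  (Nat.choose (n + p - 2) (n - 1) : ℚ) ^ 2 * ((n : ℚ) + 2 * p - 2)
    / ((n : ℚ) * (p : ℚ) ^ n)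

lemma key_ineq (m q : ℕ) (h : (2 ≤ q ∧ q+1 ≤ 2*m) ∨ (q ≤ 1 ∧ q+2 ≤ m)) :
    (m+q+2)^2*(m+2*q+4) < (q+2)*(m+1)*(m+2)*(m+2*q+3) := by
  rcases h with ⟨hq, hm⟩ | ⟨hq, hm⟩
  · nlinarith [sq_nonneg (2*m-q-1), sq_nonneg (m+q),
      mul_le_mul hm hm (by omega) (by omega : (0:ℕ) ≤ 2*m), Nat.mul_le_mul hq hm]
  · interval_cases q <;> nlinarith [sq_nonneg m, hm]

/-- Lemma 2.5(1): `F(n+1,p) < F(n,p)` if either `p > 3` and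
`n ≥ (p+1)/2`, or `p ≤ 3` and `n ≥ p+1`. -/
theorem stmt5 (n p : ℕ) (hn : 0 < n) (hp : p.Prime)
    (h : (3 < p ∧ p + 1 ≤ 2 * n) ∨ (p ≤ 3 ∧ p + 1 ≤ n)) :
    Fnp (n + 1) p < Fnp n p := by
  obtain ⟨m, rfl⟩ : ∃ m, n = m + 1 := ⟨n - 1, by omega⟩
  obtain ⟨q, rfl⟩ : ∃ q, p = q + 2 := ⟨p - 2, by have := hp.two_le; omega⟩
  have h' : (2 ≤ q ∧ q+1 ≤ 2*m) ∨ (q ≤ 1 ∧ q+2 ≤ m) := by omega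
  have e1 : m + 1 + (q + 2) - 2 = m + q + 1 := by omega
  have e2 : m + 1 + 1 + (q + 2) - 2 = m + q + 2 := by omega
  have e3 : m + 1 - 1 = m := by omega
  have e4 : m + 1 + 1 - 1 = m + 1 := by omega
  rw [Fnp, Fnp, e1, e2, e3, e4]
  set A : ℚ := (Nat.choose (m + q + 1) m : ℚ) with hA
  set B : ℚ := (Nat.choose (m + q + 2) (m + 1) : ℚ) with hB
  have hAB : ((m:ℚ) + q + 2) * A = B * ((m:ℚ) + 1) := by
    have := Nat.add_one_mul_choose_eq (m + q + 1) m
    have h2 : (m + q + 2) * Nat.choose (m + q + 1) m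
        = Nat.choose (m + q + 2) (m + 1) * (m + 1) := by
      simpa [Nat.succ_eq_add_one] using this
    rw [hA, hB]
    exact_mod_cast congrArg (Nat.cast : ℕ → ℚ) h2
  have hApos : 0 < A := by
    have h3 : 0 < Nat.choose (m + q + 1) m := Nat.choose_pos (by omega)
    rw [hA]; exact_mod_cast h3
  have hPpos : (0:ℚ) < ((q:ℚ) + 2) ^ (m + 1) := by positivity
  have hkey := key_ineq m q h'
  have hkeyQ : ((m:ℚ)+q+2)^2*((m:ℚ)+2*q+4) < ((q:ℚ)+2)*((m:ℚ)+1)*((m:ℚ)+2)*((m:ℚ)+2*q+3) := by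
    exact_mod_cast hkey
  rw [div_lt_div_iff₀ (by positivity) (by positivity)]
  have hcast : ((q:ℚ) + 2) ^ (m + 1 + 1) = ((q:ℚ)+2) * ((q:ℚ)+2)^(m+1) := by ring
  push_cast
  rw [hcast]
  have hm1 : (0:ℚ) < (m:ℚ)+1 := by positivity
  rw [← mul_lt_mul_iff_left₀ hm1]
  have hB2 : (((m:ℚ)+q+2)*A)^2 = (B*((m:ℚ)+1))^2 := by rw [hAB]
  have hmain := mul_lt_mul_of_pos_left hkeyQ
    (show (0:ℚ) < A^2*((q:ℚ)+2)^(m+1) by positivity)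
  nlinarith [hmain, hB2, hPpos, congrArg (· * (((m:ℚ)+2*q+4) * ((q:ℚ)+2)^(m+1))) hB2]
end

section
/- For every prime p > 45, F((p+1)/2, p) < 1, where F(n,p) = C(n+p−2, n−1)² · (n+2p−2)/(n·pⁿ). In particular, combined with the Blokhuis–Moorhouse bound, the Hermitian polar space H(n, q²) with q a power of p contains no ovoid when n ≥ (p+1)/2 and p > 45. -/
lemma chooseA (m : ℕ) : Nat.choose (3*m) m * 4^m ≤ 27^m := by
  have key : Nat.choose (3*m) (2*m) * 2^(2*m) ≤ 3^(3*m) := by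
    have h : (3:ℕ)^(3*m) = ∑ k ∈ Finset.range (3*m+1), 2^k * 1^(3*m-k) * Nat.choose (3*m) k := by
      have h0 := add_pow (2:ℕ) 1 (3*m)
      simpa using h0
    have hmem : 2*m ∈ Finset.range (3*m+1) := by
      simp only [Finset.mem_range]; omega
    have hle := Finset.single_le_sum
      (f := fun k => 2^k * 1^(3*m-k) * Nat.choose (3*m) k)
      (fun i _ => Nat.zero_le _) hmem
    rw [h]
    calc Nat.choose (3*m) (2*m) * 2^(2*m)
        = 2^(2*m) * 1^(3*m-2*m) * Nat.choose (3*m) (2*m) := by ring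
      _ ≤ _ := hle
  have hsymm : Nat.choose (3*m) (2*m) = Nat.choose (3*m) m := by
    have : 3*m - m = 2*m := by omega
    rw [← this, Nat.choose_symm (by omega)]
  calc Nat.choose (3*m) m * 4^m = Nat.choose (3*m) (2*m) * 2^(2*m) := by
        rw [hsymm, show (4:ℕ) = 2^2 by norm_num, ← pow_mul, Nat.mul_comm 2 m]
    _ ≤ 3^(3*m) := key
    _ = 27^m := by rw [show (27:ℕ) = 3^3 by norm_num, ← pow_mul]

/-- Lemma 2.5(2): for every prime `p > 45`, `F((p+1)/2, p) < 1`. -/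
theorem stmt7 (p : ℕ) (hp : p.Prime) (hp45 : 45 < p) :
    Fnp ((p + 1) / 2) p < 1 := by
  have hodd : Odd p := hp.odd_of_ne_two (by omega)
  obtain ⟨m, hm⟩ := hodd
  subst hm
  have hm23 : 23 ≤ m := by omega
  have h1 : (2*m+1+1)/2 = m+1 := by omega
  rw [h1]
  unfold Fnp
  rw [show m+1 + (2*m+1) - 2 = 3*m by omega, show m+1-1 = m from rfl]
  rw [div_lt_one (by positivity)]
  -- reduce to a natural-number inequality
  have hnat : Nat.choose (3*m) m ^ 2 * (5*m+1) < (m+1) * (2*m+1)^(m+1) := by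
    have h16 : 0 < 16^m := Nat.pow_pos (by norm_num)
    have hA := chooseA m
    have hA2 : Nat.choose (3*m) m ^ 2 * 16^m ≤ 729^m := by
      calc Nat.choose (3*m) m ^ 2 * 16^m
          = (Nat.choose (3*m) m * 4^m)^2 := by
            rw [mul_pow, ← pow_mul, show (16:ℕ) = 4^2 by norm_num, ← pow_mul,
              Nat.mul_comm m 2]
        _ ≤ (27^m)^2 := Nat.pow_le_pow_left hA 2
        _ = 729^m := by
            rw [← pow_mul, show (729:ℕ) = 27^2 by norm_num, ← pow_mul, Nat.mul_comm m 2]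
    have hmain : Nat.choose (3*m) m ^ 2 * (5*m+1) * 16^m
        < ((m+1) * (2*m+1)^(m+1)) * 16^m := by
      calc Nat.choose (3*m) m ^ 2 * (5*m+1) * 16^m
          = (Nat.choose (3*m) m ^ 2 * 16^m) * (5*m+1) := by ring
        _ ≤ 729^m * (5*m+1) := Nat.mul_le_mul_right _ hA2
        _ < 729^m * ((2*m+1)*(m+1)) := by
            have h5 : 5*m+1 < (2*m+1)*(m+1) := by nlinarith
            exact Nat.mul_lt_mul_of_pos_left h5 (Nat.pow_pos (by norm_num))
        _ ≤ (16*(2*m+1))^m * ((2*m+1)*(m+1)) := by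
            apply Nat.mul_le_mul_right
            apply Nat.pow_le_pow_left
            omega
        _ = ((m+1) * (2*m+1)^(m+1)) * 16^m := by
            rw [mul_pow, pow_succ]
            ring
    exact Nat.lt_of_mul_lt_mul_right hmain
  have hq : ((Nat.choose (3*m) m : ℚ))^2 * (5*m+1) < (m+1) * (2*m+1)^(m+1) := by
    exact_mod_cast hnat
  push_cast
  convert hq using 1; rfl; ring
end

section
/- Let q be an even prime power, n an odd integer ≥ 3, δ ∈ F_{q^2} with δ + δ^q = 1, and v = δ^{q+1} ∈ F_q*. Then the polynomial X² + X + v is irreducible over F_q, and for z = 1 + x + yδ with x, y ∈ F_{qⁿ}, the condition z^{qⁿ+1} = 1 is equivalent to x² + y²v + xy + y = 0, and the condition Tr_{F_{q^{2n}}/F_{q^2}}(z) = 1 is equivalent to Tr_{F_{qⁿ}/F_q}(x) = 0 and Tr_{F_{qⁿ}/F_q}(y) = 0. -/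
/-- computations inside the proof of Lemma 3.4: let `q` be an even
prime power, `n ≥ 3` odd, `δ ∈ F_{q^2}` with `δ + δ^q = 1`, and `v = δ^{q+1}`.
Then `v ∈ F_q^*`, the polynomial `X² + X + v` is irreducible over `F_q`
(equivalently, being quadratic, it has no root in `F_q`), and for
`z = 1 + x + yδ` with `x, y ∈ F_{q^n}`:
`z^{q^n+1} = 1` iff `x² + y²v + xy + y = 0`, and
`Tr_{F_{q^{2n}}/F_{q^2}}(z) = 1` iff `Tr_{F_{q^n}/F_q}(x) = 0` and
`Tr_{F_{q^n}/F_q}(y) = 0`. -/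
theorem stmt12 (q n : ℕ) (hq : IsPrimePow q) (hqeven : Even q)
    (hn : Odd n) (hn3 : 3 ≤ n)
    {F : Type*} [Field F] [Fintype F] (hF : Fintype.card F = q ^ (2 * n))
    (δ : F) (hδmem : δ ^ (q ^ 2) = δ) (hδ : δ + δ ^ q = 1) :
    (δ ^ (q + 1) ≠ 0 ∧ (δ ^ (q + 1)) ^ q = δ ^ (q + 1)) ∧
    (∀ a : F, a ^ q = a → a ^ 2 + a + δ ^ (q + 1) ≠ 0) ∧
    (∀ x y : F, x ^ (q ^ n) = x → y ^ (q ^ n) = y →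
      (((1 + x + y * δ) ^ (q ^ n + 1) = 1) ↔
        x ^ 2 + y ^ 2 * δ ^ (q + 1) + x * y + y = 0) ∧
      ((∑ i ∈ Finset.range n, (1 + x + y * δ) ^ ((q ^ 2) ^ i)) = 1 ↔
        ((∑ i ∈ Finset.range n, x ^ (q ^ i)) = 0 ∧
          (∑ i ∈ Finset.range n, y ^ (q ^ i)) = 0))) := by
  -- q = 2 ^ k
  obtain ⟨p, k, hp, hk, hpk⟩ := hq
  rw [← Nat.prime_iff] at hp
  have hp2 : p = 2 := by
    have h2 : 2 ∣ p := Nat.prime_two.dvd_of_dvd_pow (n := k) (hpk ▸ hqeven.two_dvd)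
    exact ((Nat.prime_dvd_prime_iff_eq Nat.prime_two hp).mp h2).symm
  have hq2 : q = 2 ^ k := by rw [← hpk, hp2]
  have hn0 : 0 < n := by omega
  haveI : Fact (Nat.Prime 2) := ⟨Nat.prime_two⟩
  haveI hchar : CharP F 2 := by
    obtain ⟨p', hp'⟩ := CharP.exists F
    haveI := hp'
    obtain ⟨m, hm, hcard⟩ := FiniteField.card F p'
    have h1 : p' ∣ 2 ^ (k * (2 * n)) := by
      rw [hq2, ← pow_mul] at hF
      rw [← hF, hcard]
      exact dvd_pow_self p' (by positivity)
    have : p' = 2 :=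
      (Nat.prime_dvd_prime_iff_eq hm Nat.prime_two).mp (hm.dvd_of_dvd_pow h1)
    exact this ▸ hp'
  have htwo : (2 : F) = 0 := CharP.cast_eq_zero F 2
  -- Frobenius additivity
  have hadd : ∀ (m : ℕ) (a b : F), (a + b) ^ (q ^ m) = a ^ (q ^ m) + b ^ (q ^ m) := by
    intro m a b
    have h : q ^ m = 2 ^ (k * m) := by rw [hq2, pow_mul]
    rw [h]
    exact add_pow_char_pow a b 2 (k * m)
  have haddq : ∀ a b : F, (a + b) ^ q = a ^ q + b ^ q := by
    intro a b
    simpa using hadd 1 a b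
  have hδ0 : δ ≠ 0 := by
    intro h
    rw [h, zero_pow (by rw [hq2]; positivity : q ≠ 0), add_zero] at hδ
    exact zero_ne_one hδ
  have hδq : δ ^ q = 1 + δ := by linear_combination hδ - δ * htwo
  set v := δ ^ (q + 1) with hv
  have hveq : v = δ + δ ^ 2 := by
    rw [hv, pow_succ, hδq]; ring
  have hvq : v ^ q = v := by
    rw [hv, ← pow_mul]
    have h1 : (q + 1) * q = q ^ 2 + q := by ring
    rw [h1, pow_add, hδmem, mul_comm, ← pow_succ]
  refine ⟨⟨pow_ne_zero _ hδ0, hvq⟩, ?_, ?_⟩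
  · -- no root in F_q
    intro a ha hroot
    have hδa : (δ + a) * (δ + a + 1) = 0 := by
      linear_combination -hroot - hveq + (δ * a + a + a ^ 2 + δ) * htwo + (δ * δ ^ q - δ) * htwo
    rcases mul_eq_zero.mp hδa with h | h
    · have hda : δ = a := by linear_combination h - a * htwo
      rw [← hda, hδq] at ha
      exact one_ne_zero (by linear_combination ha + htwo - δ * htwo + (δ - 1) * htwo : (1 : F) = 0)
    · have hda : δ = a + 1 := by linear_combination h - (a + 1) * htwo
      rw [hda, haddq, ha, one_pow] at hδq
      exact one_ne_zero (by linear_combination hδq - (a + 1) * htwo + 2 * htwo + a * htwo : (1 : F) = 0)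
  · intro x y hx hy
    have hδfix : ∀ i : ℕ, δ ^ ((q ^ 2) ^ i) = δ := by
      intro i
      induction i with
      | zero => simp
      | succ j ih => rw [pow_succ, pow_mul, ih, hδmem]
    obtain ⟨t, ht⟩ := hn
    have hδn : δ ^ (q ^ n) = 1 + δ := by
      have hqn : q ^ n = (q ^ 2) ^ t * q := by
        rw [ht, pow_succ, pow_mul]
      rw [hqn, pow_mul, hδfix, hδq]
    have hzn : (1 + x + y * δ) ^ (q ^ n) = 1 + x + y + y * δ := by
      rw [hadd n, hadd n, mul_pow, one_pow, hx, hy, hδn]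
      ring
    constructor
    · -- norm condition
      have hexp : (1 + x + y * δ) ^ (q ^ n + 1)
          = 1 + (x ^ 2 + y ^ 2 * v + x * y + y) := by
        rw [pow_succ, hzn]
        linear_combination (y ^ 2) * hveq + (x + y * δ + x * y * δ + y ^ 2 * δ) * htwo + (y ^ 2 * δ ^ 2 - y ^ 2 * δ * δ ^ q) * htwo
      rw [hexp, add_eq_left]
    · -- trace condition
      -- reduce exponents mod n
      have hmod : ∀ w : F, w ^ (q ^ n) = w → ∀ a : ℕ, w ^ (q ^ a) = w ^ (q ^ (a % n)) := by
        intro w hw a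
        have hfix : ∀ j : ℕ, w ^ ((q ^ n) ^ j) = w := by
          intro j
          induction j with
          | zero => simp
          | succ i ih => rw [pow_succ, pow_mul, ih, hw]
        conv_lhs => rw [← Nat.div_add_mod a n]
        rw [pow_add, pow_mul, pow_mul, hfix]
      -- the sum over q^(2i) equals the sum over q^i
      have hperm : ∀ w : F, w ^ (q ^ n) = w →
          ∑ i ∈ Finset.range n, w ^ (q ^ (2 * i)) = ∑ i ∈ Finset.range n, w ^ (q ^ i) := by
        intro w hw
        set m := (n + 1) / 2 with hm
        have hm2 : 2 * m = n + 1 := by omega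
        refine Finset.sum_nbij' (fun i => 2 * i % n) (fun j => m * j % n) ?_ ?_ ?_ ?_ ?_
        · intro a _; exact Finset.mem_range.mpr (Nat.mod_lt _ hn0)
        · intro a _; exact Finset.mem_range.mpr (Nat.mod_lt _ hn0)
        · intro a hamem
          have ha : a < n := Finset.mem_range.mp hamem
          have e1 : m * (2 * a % n) ≡ m * (2 * a) [MOD n] :=
            Nat.ModEq.mul_left m (Nat.mod_modEq _ _)
          have e2 : m * (2 * a) = a + a * n := by
            calc m * (2 * a) = (2 * m) * a := by ring
            _ = (n + 1) * a := by rw [hm2]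
            _ = a + a * n := by ring
          have := e1.trans (by rw [e2] : m * (2 * a) ≡ a + a * n [MOD n])
          unfold Nat.ModEq at this
          rw [Nat.add_mul_mod_self_right, Nat.mod_eq_of_lt ha] at this
          exact this
        · intro a hamem
          have ha : a < n := Finset.mem_range.mp hamem
          have e1 : 2 * (m * a % n) ≡ 2 * (m * a) [MOD n] :=
            Nat.ModEq.mul_left 2 (Nat.mod_modEq _ _)
          have e2 : 2 * (m * a) = a + a * n := by
            calc 2 * (m * a) = (2 * m) * a := by ring
            _ = (n + 1) * a := by rw [hm2]
            _ = a + a * n := by ring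
          have := e1.trans (by rw [e2] : 2 * (m * a) ≡ a + a * n [MOD n])
          unfold Nat.ModEq at this
          rw [Nat.add_mul_mod_self_right, Nat.mod_eq_of_lt ha] at this
          exact this
        · intro a _
          exact hmod w hw (2 * a)
      -- main computation of the partial trace
      have hsum : (∑ i ∈ Finset.range n, (1 + x + y * δ) ^ ((q ^ 2) ^ i))
          = 1 + ((∑ i ∈ Finset.range n, x ^ (q ^ i))
              + (∑ i ∈ Finset.range n, y ^ (q ^ i)) * δ) := by
        have hterm : ∀ i : ℕ, (1 + x + y * δ) ^ ((q ^ 2) ^ i)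
            = 1 + (x ^ (q ^ (2 * i)) + y ^ (q ^ (2 * i)) * δ) := by
          intro i
          have he : (q ^ 2) ^ i = q ^ (2 * i) := (pow_mul q 2 i).symm
          have hδ2i : δ ^ (q ^ (2 * i)) = δ := by rw [← he, hδfix]
          rw [he, hadd (2 * i), hadd (2 * i), mul_pow, one_pow]
          rw [hδ2i, add_assoc]
        rw [Finset.sum_congr rfl (fun i _ => hterm i), Finset.sum_add_distrib,
          Finset.sum_add_distrib, ← Finset.sum_mul, hperm x hx, hperm y hy,
          Finset.sum_const, Finset.card_range, nsmul_eq_mul]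
        have hncast : (n : F) = 1 := by
          rw [ht]; push_cast; rw [htwo]; ring
        rw [hncast, mul_one]
      rw [hsum, add_eq_left]
      -- T(x) + T(y)·δ = 0 ↔ T(x) = 0 ∧ T(y) = 0
      set Tx := ∑ i ∈ Finset.range n, x ^ (q ^ i) with hTx
      set Ty := ∑ i ∈ Finset.range n, y ^ (q ^ i) with hTy
      have hfrob : ∀ w : F, w ^ (q ^ n) = w →
          (∑ i ∈ Finset.range n, w ^ (q ^ i)) ^ q = ∑ i ∈ Finset.range n, w ^ (q ^ i) := by
        intro w hw
        have h1 : (∑ i ∈ Finset.range n, w ^ (q ^ i)) ^ q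
            = ∑ i ∈ Finset.range n, w ^ (q ^ (i + 1)) := by
          rw [hq2, sum_pow_char_pow]
          refine Finset.sum_congr rfl fun i _ => ?_
          rw [← hq2, ← pow_mul, ← pow_succ]
        rw [h1]
        have h2 := Finset.sum_range_succ' (fun i => w ^ (q ^ i)) n
        have h3 := Finset.sum_range_succ (fun i => w ^ (q ^ i)) n
        have h4 : w ^ (q ^ n) = w ^ (q ^ 0) := by rw [hw, pow_zero, pow_one]
        rw [h3, h4] at h2
        exact (add_right_cancel h2).symm
      constructor
      · intro h
        have hTxq : Tx ^ q = Tx := hfrob x hx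
        have hTyq : Ty ^ q = Ty := hfrob y hy
        have h2 : Tx + Ty * (1 + δ) = 0 := by
          have h3 : (Tx + Ty * δ) ^ q = 0 := by
            rw [h]; exact zero_pow (by rw [hq2]; positivity : q ≠ 0)
          rw [haddq, mul_pow, hTxq, hTyq, hδq] at h3
          exact h3
        have hTy0 : Ty = 0 := by linear_combination h2 - h
        have hTx0 : Tx = 0 := by
          rw [hTy0] at h; linear_combination h
        exact ⟨hTx0, hTy0⟩
      · rintro ⟨h1, h2⟩
        rw [h1, h2]; ring
end
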